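/- Let A be a unital C*-algebra, B a unital C*-subalgebra containing the unit, E : A → B a conditional expectation, and x, y ∈ A selfadjoint with ‖x‖ + ‖y‖ > 0. Suppose ε > 0 and H_x, H_y : {w ∈ B : ‖w‖ < ε} → B are analytic maps such that for a ∈ {x, y} and every invertible w with ‖w‖ < ε for which w^{-1} − a and E[(w^{-1} − a)^{-1}] are invertible, H_a(w) = w^{-1} − E[(w^{-1} − a)^{-1}]^{-1}, and such that ‖H_a(w)‖ < 2(‖x‖ + ‖y‖) for all ‖w‖ < ε, a ∈ {x, y}. Then for every b ∈ B with ‖b‖ < (ε/41)·(‖x‖ + ‖y‖)^{-1}: the holomorphic map g_b(w) := b·H_x(H_y(w)·b) maps {w ∈ B : ‖w‖ < ε} into {w ∈ B : ‖w‖ < ε/2}, g_b has a unique fixed point ω₂(b) in {w : ‖w‖ < ε}, and for every w with ‖w‖ < ε the iterates g_b^{∘n}(w) converge in norm to ω₂(b) as n → ∞. (This is the Earle–Hamilton step in the proof of Theorem 2.2.) -/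

import Mathlib

noncomputable section

open Filter

/-- Earle–Hamilton step in the proof of Theorem 2.2: if `H_x, H_y` are analytic maps on
the ball of radius `ε` of the C*-subalgebra `B` (realized via an isometric unital
star-homomorphism `ι : B → A`) which agree with the h transforms of `x` and `y` wherever
the latter are defined, and are bounded in norm by `2(‖x‖ + ‖y‖)`, then for every `b ∈ B`
with `‖b‖ < (ε/41)(‖x‖ + ‖y‖)⁻¹`, the holomorphic map `g_b(w) = b·H_x(H_y(w)·b)` maps the
`ε`-ball into the `ε/2`-ball, has a unique fixed point `ω₂(b)` there, and its iterates
converge to `ω₂(b)` from any starting point in the `ε`-ball. -/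
theorem stmt_6 {A B : Type*} [CStarAlgebra A] [CStarAlgebra B]
    [PartialOrder A] [StarOrderedRing A] [PartialOrder B] [StarOrderedRing B]
    (ι : B →⋆ₐ[ℂ] A) (hι : Isometry ι)
    (E : A →ₗ[ℂ] B) (hE1 : E 1 = 1) (hEpos : ∀ a : A, 0 ≤ a → 0 ≤ E a)
    (hEbimod : ∀ b₁ b₂ : B, ∀ a : A, E (ι b₁ * a * ι b₂) = b₁ * E a * b₂)
    (x y : A) (hx : IsSelfAdjoint x) (hy : IsSelfAdjoint y) (hxy : 0 < ‖x‖ + ‖y‖)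
    (ε : ℝ) (hε : 0 < ε)
    (Hx Hy : B → B)
    (hHxA : AnalyticOnNhd ℂ Hx (Metric.ball 0 ε))
    (hHyA : AnalyticOnNhd ℂ Hy (Metric.ball 0 ε))
    (hHx : ∀ w : B, ‖w‖ < ε → IsUnit w → IsUnit (ι (Ring.inverse w) - x) →
      IsUnit (E (Ring.inverse (ι (Ring.inverse w) - x))) →
      Hx w = Ring.inverse w - Ring.inverse (E (Ring.inverse (ι (Ring.inverse w) - x))))
    (hHy : ∀ w : B, ‖w‖ < ε → IsUnit w → IsUnit (ι (Ring.inverse w) - y) →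
      IsUnit (E (Ring.inverse (ι (Ring.inverse w) - y))) →
      Hy w = Ring.inverse w - Ring.inverse (E (Ring.inverse (ι (Ring.inverse w) - y))))
    (hbound : ∀ w : B, ‖w‖ < ε →
      ‖Hx w‖ < 2 * (‖x‖ + ‖y‖) ∧ ‖Hy w‖ < 2 * (‖x‖ + ‖y‖))
    (b : B) (hb : ‖b‖ < ε / 41 * (‖x‖ + ‖y‖)⁻¹) :
    AnalyticOnNhd ℂ (fun w => b * Hx (Hy w * b)) (Metric.ball 0 ε) ∧
    (∀ w : B, ‖w‖ < ε → ‖b * Hx (Hy w * b)‖ < ε / 2) ∧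
    ∃ ω₂ : B, ‖ω₂‖ < ε ∧ b * Hx (Hy ω₂ * b) = ω₂ ∧
      (∀ w : B, ‖w‖ < ε → b * Hx (Hy w * b) = w → w = ω₂) ∧
      (∀ w : B, ‖w‖ < ε →
        Tendsto (fun n => (fun v => b * Hx (Hy v * b))^[n] w) atTop (nhds ω₂)) := by
  set S := ‖x‖ + ‖y‖ with hS
  set g : B → B := fun w => b * Hx (Hy w * b) with hgdef
  have hbS : ‖b‖ * S < ε / 41 := by
    have : ‖b‖ < ε / 41 / S := by rw [div_eq_mul_inv (ε / 41) S]; exact hb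
    calc ‖b‖ * S < ε / 41 / S * S := by
          exact mul_lt_mul_of_pos_right this hxy
      _ = ε / 41 := div_mul_cancel₀ _ (ne_of_gt hxy)
  -- inner point stays in the ball
  have hinner : ∀ w : B, ‖w‖ < ε → ‖Hy w * b‖ < ε := by
    intro w hw
    have h1 : ‖Hy w * b‖ ≤ ‖Hy w‖ * ‖b‖ := norm_mul_le _ _
    have h2 : ‖Hy w‖ * ‖b‖ ≤ 2 * S * ‖b‖ :=
      mul_le_mul_of_nonneg_right (le_of_lt (hbound w hw).2) (norm_nonneg b)
    nlinarith [norm_nonneg b]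
  -- uniform smallness of g
  have hgw : ∀ w : B, ‖w‖ < ε → ‖g w‖ < 2 * ε / 41 := by
    intro w hw
    have h1 : ‖g w‖ ≤ ‖b‖ * ‖Hx (Hy w * b)‖ := norm_mul_le _ _
    have h2 : ‖Hx (Hy w * b)‖ < 2 * S := (hbound _ (hinner w hw)).1
    have h3 : ‖b‖ * ‖Hx (Hy w * b)‖ ≤ ‖b‖ * (2 * S) :=
      mul_le_mul_of_nonneg_left (le_of_lt h2) (norm_nonneg b)
    nlinarith [norm_nonneg b]
  -- analyticity of g
  have hmaps1 : Set.MapsTo (fun w => Hy w * b) (Metric.ball 0 ε) (Metric.ball 0 ε) := by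
    intro w hw
    rw [Metric.mem_ball, dist_zero_right] at *
    exact hinner w hw
  have hg : AnalyticOnNhd ℂ g (Metric.ball 0 ε) := by
    have h1 : AnalyticOnNhd ℂ (fun w => Hy w * b) (Metric.ball 0 ε) :=
      hHyA.mul analyticOnNhd_const
    have h2 : AnalyticOnNhd ℂ (fun w => Hx (Hy w * b)) (Metric.ball 0 ε) :=
      hHxA.comp h1 hmaps1
    exact analyticOnNhd_const.mul h2
  refine ⟨hg, fun w hw => lt_of_lt_of_le (hgw w hw) (by nlinarith), ?_⟩
  -- the contraction estimate via the Schwarz lemma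
  have hcontr : ∀ u ∈ Metric.closedBall (0:B) (ε/4), ∀ v ∈ Metric.closedBall (0:B) (ε/4),
      dist (g u) (g v) ≤ 16/123 * dist u v := by
    intro u hu v hv
    rw [Metric.mem_closedBall, dist_zero_right] at hu hv
    rcases eq_or_ne v u with rfl | hne
    · simp
    have hd : 0 < ‖v - u‖ := by
      simpa [sub_eq_zero] using hne
    set d := ‖v - u‖ with hdd
    set R₁ : ℝ := (3 * ε / 4) / d with hR₁
    set φ : ℂ → B := fun z => g (u + z • (v - u)) with hφ
    have hR₁pos : 0 < R₁ := by positivity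
    have hinball : ∀ z : ℂ, z ∈ Metric.ball (0:ℂ) R₁ → u + z • (v - u) ∈ Metric.ball (0:B) ε := by
      intro z hz
      rw [Metric.mem_ball, dist_zero_right] at *
      have h1 : ‖u + z • (v - u)‖ ≤ ‖u‖ + ‖z‖ * d := by
        calc ‖u + z • (v - u)‖ ≤ ‖u‖ + ‖z • (v - u)‖ := norm_add_le _ _
          _ = ‖u‖ + ‖z‖ * d := by rw [norm_smul]
      have h2 : ‖z‖ * d < R₁ * d := mul_lt_mul_of_pos_right hz hd
      have h3 : R₁ * d = 3 * ε / 4 := by rw [hR₁, div_mul_cancel₀ _ (ne_of_gt hd)]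
      nlinarith
    have hdφ : DifferentiableOn ℂ φ (Metric.ball (0:ℂ) R₁) := by
      intro z hz
      have haff : DifferentiableAt ℂ (fun z : ℂ => u + z • (v - u)) z :=
        (differentiableAt_id.smul_const (v - u)).const_add u
      exact ((hg _ (hinball z hz)).differentiableAt.comp z haff).differentiableWithinAt
    have hmapsφ : Set.MapsTo φ (Metric.ball (0:ℂ) R₁) (Metric.ball (φ 0) (4 * ε / 41)) := by
      intro z hz
      rw [Metric.mem_ball]
      have h0 : (0:ℂ) ∈ Metric.ball (0:ℂ) R₁ := Metric.mem_ball_self hR₁pos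
      have hz' : ‖φ z‖ < 2 * ε / 41 := hgw _ (mem_ball_zero_iff.mp (hinball z hz))
      have h0' : ‖φ 0‖ < 2 * ε / 41 := hgw _ (mem_ball_zero_iff.mp (hinball 0 h0))
      calc dist (φ z) (φ 0) ≤ ‖φ z‖ + ‖φ 0‖ := dist_le_norm_add_norm _ _
        _ < 4 * ε / 41 := by linarith
    have h1mem : (1:ℂ) ∈ Metric.ball (0:ℂ) R₁ := by
      rw [Metric.mem_ball, dist_zero_right, norm_one]
      rw [hR₁, lt_div_iff₀ hd, one_mul]
      have : d ≤ ‖v‖ + ‖u‖ := norm_sub_le _ _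
      nlinarith
    have key := Complex.dist_le_div_mul_dist_of_mapsTo_ball hdφ (hmapsφ.mono_right Metric.ball_subset_closedBall) h1mem
    have hφ1 : φ 1 = g v := by simp [hφ]
    have hφ0 : φ 0 = g u := by simp [hφ]
    rw [hφ1, hφ0] at key
    have hdist10 : dist (1:ℂ) 0 = 1 := by simp
    rw [hdist10, mul_one] at key
    have hratio : (4 * ε / 41) / R₁ = 16/123 * d := by
      rw [hR₁]
      field_simp
      ring
    rw [hratio] at key
    have hduv : dist u v = d := by rw [dist_eq_norm, hdd, ← norm_neg, neg_sub]
    rw [dist_comm] at key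
    rw [hduv]
    exact key
  -- Banach fixed point on the closed ball of radius ε/4
  set s : Set B := Metric.closedBall (0:B) (ε/4) with hsdef
  have hsc : IsComplete s := Metric.isClosed_closedBall.isComplete
  have hgs : ∀ w : B, ‖w‖ < ε → g w ∈ s := by
    intro w hw
    rw [hsdef, Metric.mem_closedBall, dist_zero_right]
    have := hgw w hw
    nlinarith
  have hsublt : ∀ w ∈ s, ‖w‖ < ε := by
    intro w hw
    rw [hsdef, Metric.mem_closedBall, dist_zero_right] at hw
    nlinarith
  have hsf : Set.MapsTo g s s := fun w hw => hgs w (hsublt w hw)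
  have hK : (16/123 : NNReal) < 1 := by rw [← NNReal.coe_lt_coe]; push_cast; norm_num
  have hL : LipschitzOnWith (16/123 : NNReal) g s := by
    apply LipschitzOnWith.of_dist_le_mul
    intro u hu v hv
    have := hcontr u hu v hv
    calc dist (g u) (g v) ≤ 16/123 * dist u v := this
      _ = ((16/123 : NNReal) : ℝ) * dist u v := by push_cast; ring
  have hCW : ContractingWith (16/123 : NNReal) (hsf.restrict g s s) :=
    ⟨hK, hL.mapsToRestrict hsf⟩
  have h0s : (0:B) ∈ s := by
    rw [hsdef, Metric.mem_closedBall]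
    simp [le_of_lt, hε]
  obtain ⟨ω₂, hω₂s, hfix, htend0, -⟩ :=
    hCW.exists_fixedPoint' hsc hsf h0s (edist_ne_top _ _)
  have hω₂ε : ‖ω₂‖ < ε := hsublt _ hω₂s
  -- uniqueness
  have huniq : ∀ w : B, ‖w‖ < ε → g w = w → w = ω₂ := by
    intro w hw hfw
    have hws : w ∈ s := hfw ▸ hgs w hw
    have h1 : dist (g w) (g ω₂) ≤ 16/123 * dist w ω₂ := hcontr w hws ω₂ hω₂s
    rw [hfw, hfix] at h1
    have : dist w ω₂ = 0 := by nlinarith [dist_nonneg (x := w) (y := ω₂)]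
    exact dist_eq_zero.mp this
  refine ⟨ω₂, hω₂ε, hfix, huniq, ?_⟩
  -- convergence from any starting point
  intro w hw
  obtain ⟨ω', hω's, hfix', htend', -⟩ :=
    hCW.exists_fixedPoint' hsc hsf (hgs w hw) (edist_ne_top _ _)
  have : ω' = ω₂ := huniq ω' (hsublt _ hω's) hfix'
  subst this
  have hshift : (fun n => g^[n] (g w)) = fun n => g^[n + 1] w := by
    funext n
    rw [Function.iterate_succ_apply]
  rw [hshift] at htend'
  exact (Filter.tendsto_add_atTop_iff_nat 1).mp htend'
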